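/- Backward recursion for feasible sets (correctness of the offline computation, equation (13)): for every time instant k ∈ [0, T] and every basic set I ∈ 𝕀_k that is reachable (i.e., x^I_{0:k-1} ≠ ∅) and with ι^root_I ≠ 1, the I-determined feasible set satisfies X_k^I = ⋃_{I_s ∈ succ(I,k)} ( H_k(I, I_s) ∩ Υ(X_{k+1}^{I_s}) ), where for k = T one sets X_{T+1}^{I'} := 𝒳 for every I'. -/

import Mathlib

namespace STLMon

/-- Three-valued satisfaction status: violated `0`, satisfied `1`, uncertain `?`. -/
inductive SatVal : Type
  | zero : SatVal
  | one : SatVal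
  | unk : SatVal
deriving DecidableEq

/-- Direction to a child in the syntax tree (`left` is also used for only-children). -/
inductive Dir : Type
  | left : Dir
  | right : Dir
deriving DecidableEq

/-- STL fragment (3): `Φ ::= G_{[a,b]} Φ | Φ₁ U'_{[a,b]} Φ₂ | Φ₁ ∧ Φ₂ | x ∈ ℋ`. -/
inductive Frag (X : Type) : Type
  | reg : Set X → Frag X
  | conj : Frag X → Frag X → Frag X
  | glob : ℕ → ℕ → Frag X → Frag X
  | untl : ℕ → ℕ → Frag X → Frag X → Frag X

namespace Frag

variable {X : Type}

/-- Semantics of the fragment: `fsat Φ x k` means `(x,k) ⊨ Φ`. -/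
def fsat : Frag X → (ℕ → X) → ℕ → Prop
  | reg H, x, k => x k ∈ H
  | conj φ ψ, x, k => fsat φ x k ∧ fsat ψ x k
  | glob a b φ, x, k => ∀ k', k + a ≤ k' → k' ≤ k + b → fsat φ x k'
  | untl a b φ ψ, x, k =>
      ∃ k', k + a ≤ k' ∧ k' ≤ k + b ∧ fsat ψ x k' ∧
        ∀ k'', k + a ≤ k'' → k'' ≤ k' → fsat φ x k''

/-- A node of the syntax tree of `Φ` is a path (list of directions) from the root;
`subAt Φ p` is the subformula `Φ^v` rooted at the node `v` with path `p`, if it exists. -/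
def subAt : Frag X → List Dir → Option (Frag X)
  | φ, [] => some φ
  | conj φ _, Dir.left :: p => subAt φ p
  | conj _ ψ, Dir.right :: p => subAt ψ p
  | glob _ _ φ, Dir.left :: p => subAt φ p
  | untl _ _ φ _, Dir.left :: p => subAt φ p
  | untl _ _ _ ψ, Dir.right :: p => subAt ψ p
  | _, _ => none

/-- Left endpoint `int^v` of the evaluation horizon of node `v`:
the sum of `a^{v'}` over all (strict) ancestors `v'` of `v`. -/
def intOf : Frag X → List Dir → ℕ
  | _, [] => 0
  | conj φ _, Dir.left :: p => intOf φ p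
  | conj _ ψ, Dir.right :: p => intOf ψ p
  | glob a _ φ, Dir.left :: p => a + intOf φ p
  | untl a _ φ _, Dir.left :: p => a + intOf φ p
  | untl a _ _ ψ, Dir.right :: p => a + intOf ψ p
  | _, _ => 0

/-- Right endpoint `end^v` of the evaluation horizon of node `v`:
the sum of `b^{v'}` over all (strict) ancestors `v'` of `v`. -/
def endOf : Frag X → List Dir → ℕ
  | _, [] => 0
  | conj φ _, Dir.left :: p => endOf φ p
  | conj _ ψ, Dir.right :: p => endOf ψ p
  | glob _ b φ, Dir.left :: p => b + endOf φ p
  | untl _ b φ _, Dir.left :: p => b + endOf φ p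
  | untl _ b _ ψ, Dir.right :: p => b + endOf ψ p
  | _, _ => 0

/-- `p` is an `ℋ`-node (a predicate leaf) of the syntax tree of `Φ`. -/
def IsHNode (Φ : Frag X) (p : List Dir) : Prop :=
  ∃ H : Set X, subAt Φ p = some (reg H)

/-- The satisfaction region `ℋ^v` attached to the `ℋ`-node at path `p`. -/
def regionAt (Φ : Frag X) (p : List Dir) : Set X :=
  match subAt Φ p with
  | some (reg H) => H
  | _ => ∅

/-- `(p, t)` is a meaningful entry of a basic set: `p` is an `ℋ`-node and
`t` lies in its evaluation horizon `[int^p, end^p]`. -/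
def Relevant (Φ : Frag X) (p : List Dir) (t : ℕ) : Prop :=
  IsHNode Φ p ∧ intOf Φ p ≤ t ∧ t ≤ endOf Φ p

/-- A basic set of satisfaction vectors: one three-valued entry for each `ℋ`-node
and each instant of its evaluation horizon. -/
def BasicSet (Φ : Frag X) : Type := ∀ p t, Relevant Φ p t → SatVal

/-- The entry of a basic set, totalized by `?` outside the relevant positions. -/
noncomputable def val (Φ : Frag X) (I : BasicSet Φ) (p : List Dir) (t : ℕ) : SatVal :=
  @dite _ (Relevant Φ p t) (Classical.dec _) (fun h => I p t h) (fun _ => SatVal.unk)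

open Classical in
/-- Induced satisfaction vectors (Definition 5): `ind β φ p t` is the induced value
`ι^v[t]` of the node `v` at path `p` carrying subformula `φ`, computed bottom-up from
the values `β` of the `ℋ`-node leaves. -/
noncomputable def ind (β : List Dir → ℕ → SatVal) : Frag X → List Dir → ℕ → SatVal
  | reg _, p, t => β p t
  | conj φ ψ, p, t =>
      if ind β φ (p ++ [Dir.left]) t = SatVal.zero ∨
         ind β ψ (p ++ [Dir.right]) t = SatVal.zero then SatVal.zero
      else if ind β φ (p ++ [Dir.left]) t = SatVal.one ∧
              ind β ψ (p ++ [Dir.right]) t = SatVal.one then SatVal.one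
      else SatVal.unk
  | glob a b φ, p, t =>
      if ∃ t', a ≤ t' ∧ t' ≤ b ∧ ind β φ (p ++ [Dir.left]) (t + t') = SatVal.zero then
        SatVal.zero
      else if ∀ t', a ≤ t' → t' ≤ b → ind β φ (p ++ [Dir.left]) (t + t') = SatVal.one then
        SatVal.one
      else SatVal.unk
  | untl a b φ ψ, p, t =>
      if (∀ t', a ≤ t' → t' ≤ b → ind β ψ (p ++ [Dir.right]) (t + t') = SatVal.zero) ∨
         (∀ t', a ≤ t' → t' ≤ b → ind β ψ (p ++ [Dir.right]) (t + t') = SatVal.one →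
            ∃ t'', a ≤ t'' ∧ t'' ≤ t' ∧ ind β φ (p ++ [Dir.left]) (t + t'') = SatVal.zero) then
        SatVal.zero
      else if ∃ t', a ≤ t' ∧ t' ≤ b ∧ ind β ψ (p ++ [Dir.right]) (t + t') = SatVal.one ∧
              ∀ t'', a ≤ t'' → t'' ≤ t' → ind β φ (p ++ [Dir.left]) (t + t'') = SatVal.one then
        SatVal.one
      else SatVal.unk

open Classical in
/-- Online update of a basic set upon observing state `xk` at instant `k`:
in each `ℋ`-node vector whose horizon contains `k`, only the entry at position `k`
is changed, to `1` if `xk ∈ ℋ^{v_i}` and to `0` otherwise. -/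
noncomputable def updateB (Φ : Frag X) (I : BasicSet Φ) (k : ℕ) (xk : X) : BasicSet Φ :=
  fun p t h =>
    if t = k then (if xk ∈ regionAt Φ p then SatVal.one else SatVal.zero) else I p t h

/-- The initial basic set `I₀`: every entry is `?`. -/
def initB (Φ : Frag X) : BasicSet Φ := fun _ _ _ => SatVal.unk

/-- `basicOf Φ x k` is `I(x_{0:k-1})`, obtained from `I₀` by successive updates
with `x 0, …, x (k-1)`. -/
noncomputable def basicOf (Φ : Frag X) (x : ℕ → X) : ℕ → BasicSet Φ
  | 0 => initB Φ
  | k + 1 => updateB Φ (basicOf Φ x k) k (x k)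

/-- Membership in `𝓘_k`: entries are `?` exactly at positions `t ≥ k`. -/
def InFam (Φ : Frag X) (I : BasicSet Φ) (k : ℕ) : Prop :=
  ∀ p t (h : Relevant Φ p t), (I p t h = SatVal.unk ↔ k ≤ t)

/-- The induced root satisfaction value `ι^root_I[0]` of a basic set `I`. -/
noncomputable def rootVal (Φ : Frag X) (I : BasicSet Φ) : SatVal :=
  ind (val Φ I) Φ [] 0

/-- `Is ∈ succ(I, k)`: `I ∈ 𝕀_k`, `Is ∈ 𝕀_{k+1}`, and `Is` agrees with `I`
on every `ℋ`-node entry at positions `t ∈ [int^v, min(k-1, end^v)]`. -/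
def Succ (Φ : Frag X) (k : ℕ) (I Is : BasicSet Φ) : Prop :=
  InFam Φ I k ∧ rootVal Φ I ≠ SatVal.zero ∧
  InFam Φ Is (k + 1) ∧ rootVal Φ Is ≠ SatVal.zero ∧
  ∀ p t (h : Relevant Φ p t), t < k → I p t h = Is p t h

/-- The consistent region `H_k(I, I_s) = ⋂ᵢ H_{i,k}`, where `H_{i,k}` is `ℋ^{v_i}` if
`ι_s^{v_i}[k] = 1`, the complement of `ℋ^{v_i}` if `ι_s^{v_i}[k] = 0`, and `𝒳` if `k`
is outside the horizon of `v_i`. -/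
def consReg (Φ : Frag X) (Is : BasicSet Φ) (k : ℕ) : Set X :=
  {x | ∀ p (h : Relevant Φ p k),
        (Is p k h = SatVal.zero → x ∉ regionAt Φ p) ∧
        (Is p k h = SatVal.one → x ∈ regionAt Φ p)}

end Frag

/-- Trajectory of the control system `x_{k+1} = f(x_k, u_k)`:
`traj f x u n` is the state after `n` steps from `x` under inputs `u`. -/
def traj {X U : Type} (f : X → U → X) (x : X) (u : ℕ → U) : ℕ → X
  | 0 => x
  | n + 1 => f (traj f x u n) (u n)

/-- The signal obtained from the prefix `xpre` on positions `0, …, k-1` followed by the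
state `xk` at position `k` and the trajectory `ξ_f(xk, u)` afterwards. -/
def runFrom {X U : Type} (f : X → U → X) (k : ℕ) (xpre : ℕ → X) (xk : X) (u : ℕ → U) :
    ℕ → X :=
  fun n => if n < k then xpre n else traj f xk u (n - k)

/-- One-step feasible set `Υ(S) = {x | ∃ u ∈ 𝒰, f(x,u) ∈ S}`. -/
def oneStep {X U : Type} (f : X → U → X) (S : Set X) : Set X :=
  {x | ∃ u : U, f x u ∈ S}

/-- The `I`-determined feasible set `X_k^I`: states `xk` from which some control makes the
signal, consisting of some prefix consistent with `I` followed by `xk` and the resulting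
trajectory, satisfy `Φ`. -/
noncomputable def feasSet {X U : Type} (Φ : Frag X) (f : X → U → X) (k : ℕ)
    (I : Frag.BasicSet Φ) : Set X :=
  {xk | ∃ xpre : ℕ → X, Frag.basicOf Φ xpre k = I ∧
          ∃ u : ℕ → U, Frag.fsat Φ (runFrom f k xpre xk u) 0}

end STLMon

open STLMon STLMon.Frag

section Infra
namespace STLMon
namespace Frag
variable {X : Type}

theorem subAt_append (p q : List Dir) (Φ : Frag X) :
    subAt Φ (p ++ q) = (subAt Φ p).bind (fun ψ => subAt ψ q) := by
  induction p generalizing Φ with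
  | nil => simp [subAt]
  | cons d p ih =>
    cases Φ <;> cases d <;> simp [subAt, ih]

theorem intOf_append (p q : List Dir) (Φ φ : Frag X) (h : subAt Φ p = some φ) :
    intOf Φ (p ++ q) = intOf Φ p + intOf φ q := by
  induction p generalizing Φ with
  | nil => simp [subAt] at h; subst h; simp [intOf]
  | cons d p ih =>
    cases Φ <;> cases d <;> simp_all [subAt, intOf] <;> omega

theorem endOf_append (p q : List Dir) (Φ φ : Frag X) (h : subAt Φ p = some φ) :
    endOf Φ (p ++ q) = endOf Φ p + endOf φ q := by
  induction p generalizing Φ with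
  | nil => simp [subAt] at h; subst h; simp [endOf]
  | cons d p ih =>
    cases Φ <;> cases d <;> simp_all [subAt, endOf] <;> omega

end Frag
end STLMon
end Infra
namespace STLMon
namespace Frag
variable {X : Type}
open Classical

theorem basicOf_spec (Φ : Frag X) (x : ℕ → X) (m : ℕ) (p : List Dir) (t : ℕ)
    (h : Relevant Φ p t) :
    basicOf Φ x m p t h =
      if t < m then (if x t ∈ regionAt Φ p then SatVal.one else SatVal.zero)
      else SatVal.unk := by
  induction m with
  | zero => simp [basicOf, initB]
  | succ m ih =>
    show updateB Φ (basicOf Φ x m) m (x m) p t h = _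
    rw [updateB]
    by_cases htm : t = m
    · subst htm
      rw [if_pos rfl, if_pos (Nat.lt_succ_self t)]
    · rw [if_neg htm, ih]
      by_cases hlt : t < m
      · rw [if_pos hlt, if_pos (show t < m + 1 by omega)]
      · rw [if_neg hlt, if_neg (show ¬ t < m + 1 by omega)]

theorem val_basicOf_spec (Φ : Frag X) (x : ℕ → X) (m : ℕ) (q : List Dir) (u : ℕ) :
    val Φ (basicOf Φ x m) q u =
      if Relevant Φ q u ∧ u < m then
        (if x u ∈ regionAt Φ q then SatVal.one else SatVal.zero)
      else SatVal.unk := by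
  rw [val]
  by_cases hr : Relevant Φ q u
  · rw [dif_pos hr, basicOf_spec]
    by_cases hu : u < m
    · rw [if_pos hu, if_pos (show Relevant Φ q u ∧ u < m from ⟨hr, hu⟩)]
    · rw [if_neg hu, if_neg (show ¬ (Relevant Φ q u ∧ u < m) by tauto)]
  · rw [dif_neg hr, if_neg (show ¬ (Relevant Φ q u ∧ u < m) by tauto)]

theorem inFam_basicOf (Φ : Frag X) (x : ℕ → X) (m : ℕ) :
    InFam Φ (basicOf Φ x m) m := by
  intro p t h
  rw [basicOf_spec]
  by_cases hlt : t < m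
  · rw [if_pos hlt]
    constructor
    · intro hx; by_cases hxm : x t ∈ regionAt Φ p <;> simp [hxm] at hx
    · intro hx; omega
  · rw [if_neg hlt]; simp; omega

theorem basicOf_congr (Φ : Frag X) (x y : ℕ → X) (m : ℕ)
    (hxy : ∀ t < m, x t = y t) : basicOf Φ x m = basicOf Φ y m := by
  funext p t h
  rw [basicOf_spec, basicOf_spec]
  by_cases hlt : t < m
  · rw [if_pos hlt, if_pos hlt, hxy t hlt]
  · rw [if_neg hlt, if_neg hlt]

end Frag
end STLMon
namespace STLMon
namespace Frag
variable {X : Type}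
open Classical

theorem subAt_child_left (Φ φ ψ : Frag X) (p : List Dir) (h : subAt Φ p = some (conj φ ψ)) :
    subAt Φ (p ++ [Dir.left]) = some φ := by rw [subAt_append, h]; simp [subAt]

theorem subAt_child_right (Φ φ ψ : Frag X) (p : List Dir) (h : subAt Φ p = some (conj φ ψ)) :
    subAt Φ (p ++ [Dir.right]) = some ψ := by rw [subAt_append, h]; simp [subAt]

theorem subAt_child_glob (Φ φ : Frag X) (a b : ℕ) (p : List Dir)
    (h : subAt Φ p = some (glob a b φ)) : subAt Φ (p ++ [Dir.left]) = some φ := by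
  rw [subAt_append, h]; simp [subAt]

theorem subAt_child_untl_left (Φ φ ψ : Frag X) (a b : ℕ) (p : List Dir)
    (h : subAt Φ p = some (untl a b φ ψ)) : subAt Φ (p ++ [Dir.left]) = some φ := by
  rw [subAt_append, h]; simp [subAt]

theorem subAt_child_untl_right (Φ φ ψ : Frag X) (a b : ℕ) (p : List Dir)
    (h : subAt Φ p = some (untl a b φ ψ)) : subAt Φ (p ++ [Dir.right]) = some ψ := by
  rw [subAt_append, h]; simp [subAt]

theorem regionAt_eq (Φ : Frag X) (p : List Dir) (H : Set X) (h : subAt Φ p = some (reg H)) :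
    regionAt Φ p = H := by rw [regionAt, h]

/-- assembling a `one` verdict for conjunction -/
theorem conj_one_intro (β : List Dir → ℕ → SatVal) (φ ψ : Frag X) (p : List Dir) (t : ℕ)
    (h1 : ind β φ (p ++ [Dir.left]) t = SatVal.one)
    (h2 : ind β ψ (p ++ [Dir.right]) t = SatVal.one) :
    ind β (conj φ ψ) p t = SatVal.one := by
  simp only [ind]
  rw [if_neg (by simp [h1, h2]), if_pos ⟨h1, h2⟩]

/-- assembling a `one` verdict for always -/
theorem glob_one_intro (β : List Dir → ℕ → SatVal) (φ : Frag X) (a b : ℕ)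
    (p : List Dir) (t : ℕ)
    (h : ∀ t', a ≤ t' → t' ≤ b → ind β φ (p ++ [Dir.left]) (t + t') = SatVal.one) :
    ind β (glob a b φ) p t = SatVal.one := by
  simp only [ind]
  have hz : ¬ ∃ t', a ≤ t' ∧ t' ≤ b ∧ ind β φ (p ++ [Dir.left]) (t + t') = SatVal.zero := by
    rintro ⟨t', ha, hb, hzero⟩
    rw [h t' ha hb] at hzero
    exact absurd hzero (by decide)
  rw [if_neg hz, if_pos h]

/-- assembling a `one` verdict for until -/
theorem untl_one_intro (β : List Dir → ℕ → SatVal) (φ ψ : Frag X) (a b : ℕ)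
    (p : List Dir) (t w : ℕ) (hw1 : a ≤ w) (hw2 : w ≤ b)
    (hψ : ind β ψ (p ++ [Dir.right]) (t + w) = SatVal.one)
    (hφ : ∀ t'', a ≤ t'' → t'' ≤ w → ind β φ (p ++ [Dir.left]) (t + t'') = SatVal.one) :
    ind β (untl a b φ ψ) p t = SatVal.one := by
  simp only [ind]
  have hzc : ¬ ((∀ t', a ≤ t' → t' ≤ b →
        ind β ψ (p ++ [Dir.right]) (t + t') = SatVal.zero) ∨
      (∀ t', a ≤ t' → t' ≤ b → ind β ψ (p ++ [Dir.right]) (t + t') = SatVal.one →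
        ∃ t'', a ≤ t'' ∧ t'' ≤ t' ∧ ind β φ (p ++ [Dir.left]) (t + t'') = SatVal.zero)) := by
    rintro (hd | hd)
    · have := hd w hw1 hw2; rw [hψ] at this; exact absurd this (by decide)
    · obtain ⟨t'', ha, hb, hz⟩ := hd w hw1 hw2 hψ
      rw [hφ t'' ha hb] at hz; exact absurd hz (by decide)
  rw [if_neg hzc,
    if_pos (show ∃ t', a ≤ t' ∧ t' ≤ b ∧
        ind β ψ (p ++ [Dir.right]) (t + t') = SatVal.one ∧
        ∀ t'', a ≤ t'' → t'' ≤ t' → ind β φ (p ++ [Dir.left]) (t + t'') = SatVal.one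
      from ⟨w, hw1, hw2, hψ, hφ⟩)]

/-- a `one` verdict is sound: the real signal satisfies the subformula -/
theorem one_sound (Φ : Frag X) (x : ℕ → X) (β : List Dir → ℕ → SatVal)
    (hs : ∀ q u, β q u = SatVal.one → x u ∈ regionAt Φ q) :
    ∀ (φ : Frag X) (p : List Dir) (t : ℕ), subAt Φ p = some φ →
      ind β φ p t = SatVal.one → fsat φ x t := by
  intro φ
  induction φ with
  | reg H =>
    intro p t hp h
    have hx := hs p t (by simpa [ind] using h)
    rw [regionAt_eq Φ p H hp] at hx
    exact hx
  | conj φ ψ ihφ ihψ =>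
    intro p t hp h
    simp only [ind] at h
    split_ifs at h with h1 h2
    exact ⟨ihφ _ t (subAt_child_left Φ φ ψ p hp) h2.1,
      ihψ _ t (subAt_child_right Φ φ ψ p hp) h2.2⟩
  | glob a b φ ihφ =>
    intro p t hp h
    simp only [ind] at h
    split_ifs at h with h1 h2
    intro k' hk1 hk2
    have h3 := h2 (k' - t) (by omega) (by omega)
    rw [show t + (k' - t) = k' by omega] at h3
    exact ihφ _ k' (subAt_child_glob Φ φ a b p hp) h3
  | untl a b φ ψ ihφ ihψ =>
    intro p t hp h
    simp only [ind] at h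
    split_ifs at h with h1 h2
    obtain ⟨t', ht1, ht2, hψ1, hφ1⟩ := h2
    refine ⟨t + t', by omega, by omega,
      ihψ _ _ (subAt_child_untl_right Φ φ ψ a b p hp) hψ1, ?_⟩
    intro k'' hk1 hk2
    have h3 := hφ1 (k'' - t) (by omega) (by omega)
    rw [show t + (k'' - t) = k'' by omega] at h3
    exact ihφ _ k'' (subAt_child_untl_left Φ φ ψ a b p hp) h3

/-- `one` verdicts persist when leaf `one`s persist -/
theorem one_mono (β β' : List Dir → ℕ → SatVal)
    (hm : ∀ q u, β q u = SatVal.one → β' q u = SatVal.one) :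
    ∀ (φ : Frag X) (p : List Dir) (t : ℕ),
      ind β φ p t = SatVal.one → ind (X := X) β' φ p t = SatVal.one := by
  intro φ
  induction φ with
  | reg H => intro p t h; simp only [ind] at h ⊢; exact hm _ _ h
  | conj φ ψ ihφ ihψ =>
    intro p t h
    simp only [ind] at h
    split_ifs at h with h1 h2
    exact conj_one_intro β' φ ψ p t (ihφ _ _ h2.1) (ihψ _ _ h2.2)
  | glob a b φ ihφ =>
    intro p t h
    simp only [ind] at h
    split_ifs at h with h1 h2
    exact glob_one_intro β' φ a b p t fun t' ha hb => ihφ _ _ (h2 t' ha hb)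
  | untl a b φ ψ ihφ ihψ =>
    intro p t h
    simp only [ind] at h
    split_ifs at h with h1 h2
    obtain ⟨t', ht1, ht2, hψ1, hφ1⟩ := h2
    exact untl_one_intro β' φ ψ a b p t t' ht1 ht2 (ihψ _ _ hψ1)
      (fun t'' ha hb => ihφ _ _ (hφ1 t'' ha hb))

end Frag
end STLMon
namespace STLMon
namespace Frag
variable {X : Type}
open Classical

/-- Key shift lemma: along a truthful prefix-structured valuation, a `one` verdict at a
later start time `s'` transfers to an earlier start time `s` at which the formula
actually holds. -/
theorem shift_one (Φ : Frag X) (x : ℕ → X) (β : List Dir → ℕ → SatVal)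
    (hs0 : ∀ q u, β q u = SatVal.zero → x u ∉ regionAt Φ q)
    (hsp : ∀ q u u', u ≤ u' → Relevant Φ q u → β q u' ≠ SatVal.unk →
      β q u ≠ SatVal.unk) :
    ∀ (ψ : Frag X) (p : List Dir) (s s' : ℕ), subAt Φ p = some ψ →
      intOf Φ p ≤ s → s' ≤ endOf Φ p → s ≤ s' →
      fsat ψ x s → ind β ψ p s' = SatVal.one → ind β ψ p s = SatVal.one := by
  intro ψ
  induction ψ with
  | reg H =>
    intro p s s' hp hint hend hss hf h
    simp only [ind] at h ⊢
    have hrel : Relevant Φ p s := ⟨⟨H, hp⟩, hint, le_trans hss hend⟩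
    have hne : β p s ≠ SatVal.unk := hsp p s s' hss hrel (by rw [h]; decide)
    cases hβ : β p s with
    | zero =>
      exact absurd ((regionAt_eq Φ p H hp) ▸ hs0 p s hβ) (by simpa [fsat] using hf)
    | one => rfl
    | unk => exact absurd hβ hne
  | conj φ ψ ihφ ihψ =>
    intro p s s' hp hint hend hss hf h
    simp only [ind] at h
    split_ifs at h with h1 h2
    have hil : intOf Φ (p ++ [Dir.left]) = intOf Φ p := by
      rw [intOf_append _ _ _ _ hp]; simp [intOf]
    have hir : intOf Φ (p ++ [Dir.right]) = intOf Φ p := by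
      rw [intOf_append _ _ _ _ hp]; simp [intOf]
    have hel : endOf Φ (p ++ [Dir.left]) = endOf Φ p := by
      rw [endOf_append _ _ _ _ hp]; simp [endOf]
    have her : endOf Φ (p ++ [Dir.right]) = endOf Φ p := by
      rw [endOf_append _ _ _ _ hp]; simp [endOf]
    exact conj_one_intro β φ ψ p s
      (ihφ _ s s' (subAt_child_left Φ φ ψ p hp) (by omega) (by omega) hss hf.1 h2.1)
      (ihψ _ s s' (subAt_child_right Φ φ ψ p hp) (by omega) (by omega) hss hf.2 h2.2)
  | glob a b φ ihφ =>
    intro p s s' hp hint hend hss hf h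
    simp only [ind] at h
    split_ifs at h with h1 h2
    have hil : intOf Φ (p ++ [Dir.left]) = intOf Φ p + a := by
      rw [intOf_append _ _ _ _ hp]; simp [intOf]
    have hel : endOf Φ (p ++ [Dir.left]) = endOf Φ p + b := by
      rw [endOf_append _ _ _ _ hp]; simp [endOf]
    refine glob_one_intro β φ a b p s fun t' ha hb => ?_
    exact ihφ _ (s + t') (s' + t') (subAt_child_glob Φ φ a b p hp)
      (by omega) (by omega) (by omega) (hf (s + t') (by omega) (by omega))
      (h2 t' ha hb)
  | untl a b φ ψ ihφ ihψ =>
    intro p s s' hp hint hend hss hf h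
    have hpl := subAt_child_untl_left Φ φ ψ a b p hp
    have hpr := subAt_child_untl_right Φ φ ψ a b p hp
    have hil : intOf Φ (p ++ [Dir.left]) = intOf Φ p + a := by
      rw [intOf_append _ _ _ _ hp]; simp [intOf]
    have hel : endOf Φ (p ++ [Dir.left]) = endOf Φ p + b := by
      rw [endOf_append _ _ _ _ hp]; simp [endOf]
    have hir : intOf Φ (p ++ [Dir.right]) = intOf Φ p + a := by
      rw [intOf_append _ _ _ _ hp]; simp [intOf]
    have her : endOf Φ (p ++ [Dir.right]) = endOf Φ p + b := by
      rw [endOf_append _ _ _ _ hp]; simp [endOf]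
    simp only [ind] at h
    split_ifs at h with h1 h2
    obtain ⟨w, hw1, hw2, hψone, hφone⟩ := h2
    obtain ⟨ks, hk1, hk2, hψsat, hφsat⟩ := hf
    have hab : a ≤ b := le_trans hw1 hw2
    -- uniform argument for the `φ` part
    have hχ : ∀ P, s + a ≤ P → P ≤ s' + w → fsat φ x P →
        ind β φ (p ++ [Dir.left]) P = SatVal.one := by
      intro P hPa hPw hPf
      by_cases hc : s' + a ≤ P
      · have hh := hφone (P - s') (by omega) (by omega)
        rwa [show s' + (P - s') = P by omega] at hh
      · have hone := hφone a le_rfl hw1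
        exact ihφ _ P (s' + a) hpl (by omega) (by omega) (by omega) hPf hone
    rcases le_or_gt ks (s' + w) with hc | hc
    · -- use w₁ = ks - s
      have hψ1 : ind β ψ (p ++ [Dir.right]) ks = SatVal.one :=
        ihψ _ ks (s' + w) hpr (by omega) (by omega) hc hψsat hψone
      refine untl_one_intro β φ ψ a b p s (ks - s) (by omega) (by omega)
        (by rwa [show s + (ks - s) = ks by omega]) ?_
      intro t'' ha hb
      exact hχ (s + t'') (by omega) (by omega) (hφsat (s + t'') (by omega) (by omega))
    · -- use w₁ = s' + w - s
      refine untl_one_intro β φ ψ a b p s (s' + w - s) (by omega) (by omega)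
        (by rwa [show s + (s' + w - s) = s' + w by omega]) ?_
      intro t'' ha hb
      exact hχ (s + t'') (by omega) (by omega) (hφsat (s + t'') (by omega) (by omega))

end Frag
end STLMon
namespace STLMon
namespace Frag
variable {X : Type}
open Classical

/-- Stable satisfaction certificate: a structurally-`one`-supported witness of
satisfaction, robust under truthful updates. -/
def good (β : List Dir → ℕ → SatVal) (x : ℕ → X) : Frag X → List Dir → ℕ → Prop
  | reg H, _, t => x t ∈ H
  | conj φ ψ, p, t => good β x φ (p ++ [Dir.left]) t ∧ good β x ψ (p ++ [Dir.right]) t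
  | glob a b φ, p, t => ∀ t', a ≤ t' → t' ≤ b → good β x φ (p ++ [Dir.left]) (t + t')
  | untl a b φ ψ, p, t => ∃ t', a ≤ t' ∧ t' ≤ b ∧
      ind β ψ (p ++ [Dir.right]) (t + t') = SatVal.one ∧
      ∀ t'', a ≤ t'' → t'' ≤ t' → good β x φ (p ++ [Dir.left]) (t + t'')

/-- (G1) a good certificate implies satisfaction and a non-`zero` verdict. -/
theorem good_sound (Φ : Frag X) (x : ℕ → X) (β : List Dir → ℕ → SatVal)
    (hs1 : ∀ q u, β q u = SatVal.one → x u ∈ regionAt Φ q)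
    (hs0 : ∀ q u, β q u = SatVal.zero → x u ∉ regionAt Φ q) :
    ∀ (φ : Frag X) (p : List Dir) (t : ℕ), subAt Φ p = some φ →
      good β x φ p t → fsat φ x t ∧ ind β φ p t ≠ SatVal.zero := by
  intro φ
  induction φ with
  | reg H =>
    intro p t hp hg
    refine ⟨hg, ?_⟩
    simp only [ind]
    intro hβ
    exact absurd ((regionAt_eq Φ p H hp) ▸ hs0 p t hβ) (by simpa [good] using hg)
  | conj φ ψ ihφ ihψ =>
    intro p t hp hg
    obtain ⟨hf1, hne1⟩ := ihφ _ t (subAt_child_left Φ φ ψ p hp) hg.1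
    obtain ⟨hf2, hne2⟩ := ihψ _ t (subAt_child_right Φ φ ψ p hp) hg.2
    refine ⟨⟨hf1, hf2⟩, ?_⟩
    simp only [ind]
    rw [if_neg (by tauto)]
    split_ifs <;> decide
  | glob a b φ ihφ =>
    intro p t hp hg
    have hall := fun t' ha hb => ihφ _ (t + t') (subAt_child_glob Φ φ a b p hp) (hg t' ha hb)
    constructor
    · intro k' hk1 hk2
      have := (hall (k' - t) (by omega) (by omega)).1
      rwa [show t + (k' - t) = k' by omega] at this
    · simp only [ind]
      rw [if_neg (by rintro ⟨t', ha, hb, hz⟩; exact (hall t' ha hb).2 hz)]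
      split_ifs <;> decide
  | untl a b φ ψ ihφ ihψ =>
    intro p t hp hg
    obtain ⟨w, hw1, hw2, hψ1, hφg⟩ := hg
    have hψsat := one_sound Φ x β hs1 ψ _ _ (subAt_child_untl_right Φ φ ψ a b p hp) hψ1
    have hφall := fun t'' ha hb =>
      ihφ _ (t + t'') (subAt_child_untl_left Φ φ ψ a b p hp) (hφg t'' ha hb)
    constructor
    · refine ⟨t + w, by omega, by omega, hψsat, ?_⟩
      intro k'' h1 h2
      have := (hφall (k'' - t) (by omega) (by omega)).1
      rwa [show t + (k'' - t) = k'' by omega] at this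
    · simp only [ind]
      have hzc : ¬ ((∀ t', a ≤ t' → t' ≤ b →
            ind β ψ (p ++ [Dir.right]) (t + t') = SatVal.zero) ∨
          (∀ t', a ≤ t' → t' ≤ b → ind β ψ (p ++ [Dir.right]) (t + t') = SatVal.one →
            ∃ t'', a ≤ t'' ∧ t'' ≤ t' ∧
              ind β φ (p ++ [Dir.left]) (t + t'') = SatVal.zero)) := by
        rintro (hd | hd)
        · have := hd w hw1 hw2; rw [hψ1] at this; exact absurd this (by decide)
        · obtain ⟨t'', ha, hb, hz⟩ := hd w hw1 hw2 hψ1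
          exact (hφall t'' ha hb).2 hz
      rw [if_neg hzc]
      split_ifs <;> decide

/-- (G2) good certificates persist under `one`-preserving refinements. -/
theorem good_mono (β β' : List Dir → ℕ → SatVal) (x : ℕ → X)
    (hm : ∀ q u, β q u = SatVal.one → β' q u = SatVal.one) :
    ∀ (φ : Frag X) (p : List Dir) (t : ℕ), good β x φ p t → good β' x φ p t := by
  intro φ
  induction φ with
  | reg H => intro p t hg; exact hg
  | conj φ ψ ihφ ihψ => intro p t hg; exact ⟨ihφ _ _ hg.1, ihψ _ _ hg.2⟩
  | glob a b φ ihφ => intro p t hg t' ha hb; exact ihφ _ _ (hg t' ha hb)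
  | untl a b φ ψ ihφ ihψ =>
    intro p t hg
    obtain ⟨w, hw1, hw2, hψ1, hφg⟩ := hg
    exact ⟨w, hw1, hw2, one_mono β β' hm ψ _ _ hψ1,
      fun t'' ha hb => ihφ _ _ (hφg t'' ha hb)⟩

/-- (G3) satisfaction together with a non-`zero` verdict yields a good certificate. -/
theorem good_of (Φ : Frag X) (x : ℕ → X) (β : List Dir → ℕ → SatVal)
    (hs1 : ∀ q u, β q u = SatVal.one → x u ∈ regionAt Φ q)
    (hs0 : ∀ q u, β q u = SatVal.zero → x u ∉ regionAt Φ q)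
    (hsp : ∀ q u u', u ≤ u' → Relevant Φ q u → β q u' ≠ SatVal.unk →
      β q u ≠ SatVal.unk) :
    ∀ (φ : Frag X) (p : List Dir) (t : ℕ), subAt Φ p = some φ →
      intOf Φ p ≤ t → t ≤ endOf Φ p →
      fsat φ x t → ind β φ p t ≠ SatVal.zero → good β x φ p t := by
  intro φ
  induction φ with
  | reg H => intro p t hp _ _ hf _; exact hf
  | conj φ ψ ihφ ihψ =>
    intro p t hp hint hend hf hne
    have hil : intOf Φ (p ++ [Dir.left]) = intOf Φ p := by
      rw [intOf_append _ _ _ _ hp]; simp [intOf]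
    have hir : intOf Φ (p ++ [Dir.right]) = intOf Φ p := by
      rw [intOf_append _ _ _ _ hp]; simp [intOf]
    have hel : endOf Φ (p ++ [Dir.left]) = endOf Φ p := by
      rw [endOf_append _ _ _ _ hp]; simp [endOf]
    have her : endOf Φ (p ++ [Dir.right]) = endOf Φ p := by
      rw [endOf_append _ _ _ _ hp]; simp [endOf]
    have hc : ¬ (ind β φ (p ++ [Dir.left]) t = SatVal.zero ∨
        ind β ψ (p ++ [Dir.right]) t = SatVal.zero) := by
      intro hc
      apply hne
      simp only [ind]
      rw [if_pos hc]
    push_neg at hc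
    exact ⟨ihφ _ t (subAt_child_left Φ φ ψ p hp) (by omega) (by omega) hf.1 hc.1,
      ihψ _ t (subAt_child_right Φ φ ψ p hp) (by omega) (by omega) hf.2 hc.2⟩
  | glob a b φ ihφ =>
    intro p t hp hint hend hf hne
    have hil : intOf Φ (p ++ [Dir.left]) = intOf Φ p + a := by
      rw [intOf_append _ _ _ _ hp]; simp [intOf]
    have hel : endOf Φ (p ++ [Dir.left]) = endOf Φ p + b := by
      rw [endOf_append _ _ _ _ hp]; simp [endOf]
    have hc : ¬ ∃ t', a ≤ t' ∧ t' ≤ b ∧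
        ind β φ (p ++ [Dir.left]) (t + t') = SatVal.zero := by
      intro hc
      apply hne
      simp only [ind]
      rw [if_pos hc]
    push_neg at hc
    intro t' ha hb
    exact ihφ _ (t + t') (subAt_child_glob Φ φ a b p hp) (by omega) (by omega)
      (hf (t + t') (by omega) (by omega)) (hc t' ha hb)
  | untl a b φ ψ ihφ ihψ =>
    intro p t hp hint hend hf hne
    have hpl := subAt_child_untl_left Φ φ ψ a b p hp
    have hpr := subAt_child_untl_right Φ φ ψ a b p hp
    have hil : intOf Φ (p ++ [Dir.left]) = intOf Φ p + a := by
      rw [intOf_append _ _ _ _ hp]; simp [intOf]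
    have hel : endOf Φ (p ++ [Dir.left]) = endOf Φ p + b := by
      rw [endOf_append _ _ _ _ hp]; simp [endOf]
    have hir : intOf Φ (p ++ [Dir.right]) = intOf Φ p + a := by
      rw [intOf_append _ _ _ _ hp]; simp [intOf]
    have her : endOf Φ (p ++ [Dir.right]) = endOf Φ p + b := by
      rw [endOf_append _ _ _ _ hp]; simp [endOf]
    obtain ⟨ks, hk1, hk2, hψsat, hφsat⟩ := hf
    have hc : ¬ ((∀ t', a ≤ t' → t' ≤ b →
          ind β ψ (p ++ [Dir.right]) (t + t') = SatVal.zero) ∨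
        (∀ t', a ≤ t' → t' ≤ b → ind β ψ (p ++ [Dir.right]) (t + t') = SatVal.one →
          ∃ t'', a ≤ t'' ∧ t'' ≤ t' ∧
            ind β φ (p ++ [Dir.left]) (t + t'') = SatVal.zero)) := by
      intro hc
      apply hne
      simp only [ind]
      rw [if_pos hc]
    push_neg at hc
    obtain ⟨_, t0, ht01, ht02, hψ0, hnz⟩ := hc
    -- hnz : φ-children are non-zero up to t0
    have hφnz : ∀ t'', a ≤ t'' → t'' ≤ t0 →
        ind β φ (p ++ [Dir.left]) (t + t'') ≠ SatVal.zero := hnz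
    rcases le_or_gt (t + t0) ks with hc1 | hc1
    · -- true witness beyond t0 : use t0 itself
      refine ⟨t0, ht01, ht02, hψ0, ?_⟩
      intro t'' ha hb
      exact ihφ _ (t + t'') hpl (by omega) (by omega)
        (hφsat (t + t'') (by omega) (by omega)) (hφnz t'' ha hb)
    · -- true witness before t0 : shift the ψ-one verdict down to it
      have hψ1 : ind β ψ (p ++ [Dir.right]) ks = SatVal.one :=
        shift_one Φ x β hs0 hsp ψ _ ks (t + t0) hpr (by omega) (by omega)
          (by omega) hψsat hψ0
      refine ⟨ks - t, by omega, by omega,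
        (by rwa [show t + (ks - t) = ks by omega]), ?_⟩
      intro t'' ha hb
      exact ihφ _ (t + t'') hpl (by omega) (by omega)
        (hφsat (t + t'') (by omega) (by omega)) (hφnz t'' ha (by omega))

end Frag
end STLMon
namespace STLMon
namespace Frag
variable {X : Type}
open Classical

/-- On fully determined truthful valuations, the induced verdict coincides with the
real satisfaction value. -/
theorem ind_exact (Φ : Frag X) (x : ℕ → X) (β : List Dir → ℕ → SatVal)
    (hβ : ∀ q u, Relevant Φ q u →
      β q u = if x u ∈ regionAt Φ q then SatVal.one else SatVal.zero) :
    ∀ (φ : Frag X) (p : List Dir) (t : ℕ), subAt Φ p = some φ →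
      intOf Φ p ≤ t → t ≤ endOf Φ p →
      ind β φ p t = if fsat φ x t then SatVal.one else SatVal.zero := by
  intro φ
  induction φ with
  | reg H =>
    intro p t hp hint hend
    have hrel : Relevant Φ p t := ⟨⟨H, hp⟩, hint, hend⟩
    simp only [ind, fsat]
    rw [hβ p t hrel, regionAt_eq Φ p H hp]
    rfl
  | conj φ ψ ihφ ihψ =>
    intro p t hp hint hend
    have hil : intOf Φ (p ++ [Dir.left]) = intOf Φ p := by
      rw [intOf_append _ _ _ _ hp]; simp [intOf]
    have hir : intOf Φ (p ++ [Dir.right]) = intOf Φ p := by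
      rw [intOf_append _ _ _ _ hp]; simp [intOf]
    have hel : endOf Φ (p ++ [Dir.left]) = endOf Φ p := by
      rw [endOf_append _ _ _ _ hp]; simp [endOf]
    have her : endOf Φ (p ++ [Dir.right]) = endOf Φ p := by
      rw [endOf_append _ _ _ _ hp]; simp [endOf]
    have e1 := ihφ _ t (subAt_child_left Φ φ ψ p hp) (by omega) (by omega)
    have e2 := ihψ _ t (subAt_child_right Φ φ ψ p hp) (by omega) (by omega)
    simp only [ind, fsat, e1, e2]
    by_cases hf1 : fsat φ x t <;> by_cases hf2 : fsat ψ x t <;>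
      simp [hf1, hf2]
  | glob a b φ ihφ =>
    intro p t hp hint hend
    have hil : intOf Φ (p ++ [Dir.left]) = intOf Φ p + a := by
      rw [intOf_append _ _ _ _ hp]; simp [intOf]
    have hel : endOf Φ (p ++ [Dir.left]) = endOf Φ p + b := by
      rw [endOf_append _ _ _ _ hp]; simp [endOf]
    have e : ∀ t', a ≤ t' → t' ≤ b → ind β φ (p ++ [Dir.left]) (t + t') =
        if fsat φ x (t + t') then SatVal.one else SatVal.zero := fun t' ha hb =>
      ihφ _ (t + t') (subAt_child_glob Φ φ a b p hp) (by omega) (by omega)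
    by_cases hf : fsat (glob a b φ) x t
    · rw [if_pos hf]
      refine glob_one_intro β φ a b p t fun t' ha hb => ?_
      rw [e t' ha hb, if_pos (hf (t + t') (by omega) (by omega))]
    · rw [if_neg hf]
      simp only [fsat] at hf
      push_neg at hf
      obtain ⟨k', hk1, hk2, hk3⟩ := hf
      simp only [ind]
      rw [if_pos (show ∃ t', a ≤ t' ∧ t' ≤ b ∧
          ind β φ (p ++ [Dir.left]) (t + t') = SatVal.zero from
        ⟨k' - t, by omega, by omega, by
          rw [e (k' - t) (by omega) (by omega), show t + (k' - t) = k' by omega,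
            if_neg hk3]⟩)]
  | untl a b φ ψ ihφ ihψ =>
    intro p t hp hint hend
    have hpl := subAt_child_untl_left Φ φ ψ a b p hp
    have hpr := subAt_child_untl_right Φ φ ψ a b p hp
    have hil : intOf Φ (p ++ [Dir.left]) = intOf Φ p + a := by
      rw [intOf_append _ _ _ _ hp]; simp [intOf]
    have hel : endOf Φ (p ++ [Dir.left]) = endOf Φ p + b := by
      rw [endOf_append _ _ _ _ hp]; simp [endOf]
    have hir : intOf Φ (p ++ [Dir.right]) = intOf Φ p + a := by
      rw [intOf_append _ _ _ _ hp]; simp [intOf]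
    have her : endOf Φ (p ++ [Dir.right]) = endOf Φ p + b := by
      rw [endOf_append _ _ _ _ hp]; simp [endOf]
    have eφ : ∀ t', a ≤ t' → t' ≤ b → ind β φ (p ++ [Dir.left]) (t + t') =
        if fsat φ x (t + t') then SatVal.one else SatVal.zero := fun t' ha hb =>
      ihφ _ (t + t') hpl (by omega) (by omega)
    have eψ : ∀ t', a ≤ t' → t' ≤ b → ind β ψ (p ++ [Dir.right]) (t + t') =
        if fsat ψ x (t + t') then SatVal.one else SatVal.zero := fun t' ha hb =>
      ihψ _ (t + t') hpr (by omega) (by omega)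
    by_cases hf : fsat (untl a b φ ψ) x t
    · rw [if_pos hf]
      obtain ⟨ks, hk1, hk2, hψsat, hφsat⟩ := hf
      refine untl_one_intro β φ ψ a b p t (ks - t) (by omega) (by omega) ?_ ?_
      · rw [eψ (ks - t) (by omega) (by omega), show t + (ks - t) = ks by omega,
          if_pos hψsat]
      · intro t'' ha hb
        rw [eφ t'' ha (by omega), if_pos (hφsat (t + t'') (by omega) (by omega))]
    · rw [if_neg hf]
      simp only [fsat] at hf
      push_neg at hf
      simp only [ind]
      rw [if_pos (Or.inr ?_)]
      intro t' ha hb hone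
      rw [eψ t' ha hb] at hone
      have hψsat : fsat ψ x (t + t') := by
        by_contra hc
        rw [if_neg hc] at hone
        exact absurd hone (by decide)
      obtain ⟨k'', hk1, hk2, hk3⟩ := hf (t + t') (by omega) (by omega) hψsat
      refine ⟨k'' - t, by omega, by omega, ?_⟩
      rw [eφ (k'' - t) (by omega) (by omega), show t + (k'' - t) = k'' by omega,
        if_neg hk3]

end Frag
end STLMon
namespace STLMon
namespace Frag
variable {X : Type}
open Classical

theorem subAt_nil (Φ : Frag X) : subAt Φ [] = some Φ := by cases Φ <;> rfl

theorem val_basicOf_one (Φ : Frag X) (x : ℕ → X) (m : ℕ) :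
    ∀ q u, val Φ (basicOf Φ x m) q u = SatVal.one → x u ∈ regionAt Φ q := by
  intro q u h
  rw [val_basicOf_spec] at h
  by_cases h1 : Relevant Φ q u ∧ u < m
  · rw [if_pos h1] at h
    by_cases h2 : x u ∈ regionAt Φ q
    · exact h2
    · rw [if_neg h2] at h; exact absurd h (by decide)
  · rw [if_neg h1] at h; exact absurd h (by decide)

theorem val_basicOf_zero (Φ : Frag X) (x : ℕ → X) (m : ℕ) :
    ∀ q u, val Φ (basicOf Φ x m) q u = SatVal.zero → x u ∉ regionAt Φ q := by
  intro q u h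
  rw [val_basicOf_spec] at h
  by_cases h1 : Relevant Φ q u ∧ u < m
  · rw [if_pos h1] at h
    by_cases h2 : x u ∈ regionAt Φ q
    · rw [if_pos h2] at h; exact absurd h (by decide)
    · exact h2
  · rw [if_neg h1] at h; exact absurd h (by decide)

theorem val_basicOf_prefix (Φ : Frag X) (x : ℕ → X) (m : ℕ) :
    ∀ q u u', u ≤ u' → Relevant Φ q u →
      val Φ (basicOf Φ x m) q u' ≠ SatVal.unk →
      val Φ (basicOf Φ x m) q u ≠ SatVal.unk := by
  intro q u u' huu hrel h
  rw [val_basicOf_spec] at h ⊢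
  by_cases h1 : Relevant Φ q u' ∧ u' < m
  · rw [if_pos (show Relevant Φ q u ∧ u < m from ⟨hrel, by omega⟩)]
    split_ifs <;> decide
  · rw [if_neg h1] at h; exact absurd rfl h

theorem val_basicOf_mono (Φ : Frag X) (x : ℕ → X) (m m' : ℕ) (hm : m ≤ m') :
    ∀ q u, val Φ (basicOf Φ x m) q u = SatVal.one →
      val Φ (basicOf Φ x m') q u = SatVal.one := by
  intro q u h
  rw [val_basicOf_spec] at h ⊢
  by_cases h1 : Relevant Φ q u ∧ u < m
  · rw [if_pos h1] at h
    rw [if_pos (show Relevant Φ q u ∧ u < m' from ⟨h1.1, by omega⟩)]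
    exact h
  · rw [if_neg h1] at h; exact absurd h (by decide)

theorem val_basicOf_full (Φ : Frag X) (x : ℕ → X) (m : ℕ)
    (hfull : ∀ q u, Relevant Φ q u → u < m) :
    ∀ q u, Relevant Φ q u →
      val Φ (basicOf Φ x m) q u =
        if x u ∈ regionAt Φ q then SatVal.one else SatVal.zero := by
  intro q u hrel
  rw [val_basicOf_spec, if_pos ⟨hrel, hfull q u hrel⟩]

/-- root verdict of a fully determined basic set matches satisfaction -/
theorem rootVal_basicOf_full (Φ : Frag X) (x : ℕ → X) (m : ℕ)
    (hfull : ∀ q u, Relevant Φ q u → u < m) :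
    rootVal Φ (basicOf Φ x m) =
      if fsat Φ x 0 then SatVal.one else SatVal.zero := by
  rw [rootVal]
  exact ind_exact Φ x _ (val_basicOf_full Φ x m hfull) Φ [] 0 (subAt_nil Φ)
    (by simp [intOf]) (by simp [endOf])

/-- key persistence lemma: along a satisfying signal, a non-`zero` root verdict
persists after one more truthful observation. -/
theorem rootVal_persist (Φ : Frag X) (x : ℕ → X) (m m' : ℕ) (hm : m ≤ m')
    (hsat : fsat Φ x 0) (h : rootVal Φ (basicOf Φ x m) ≠ SatVal.zero) :
    rootVal Φ (basicOf Φ x m') ≠ SatVal.zero := by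
  rw [rootVal] at h ⊢
  have hg : good (val Φ (basicOf Φ x m)) x Φ [] 0 :=
    good_of Φ x _ (val_basicOf_one Φ x m) (val_basicOf_zero Φ x m)
      (val_basicOf_prefix Φ x m) Φ [] 0 (subAt_nil Φ) (by simp [intOf]) (by simp [endOf]) hsat h
  have hg' : good (val Φ (basicOf Φ x m')) x Φ [] 0 :=
    good_mono _ _ x (val_basicOf_mono Φ x m m' hm) Φ [] 0 hg
  exact (good_sound Φ x _ (val_basicOf_one Φ x m') (val_basicOf_zero Φ x m')
    Φ [] 0 (subAt_nil Φ) hg').2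

end Frag

theorem traj_shift {X U : Type} (f : X → U → X) (x0 : X) (u : ℕ → U) (j : ℕ) :
    traj f x0 u (j + 1) = traj f (f x0 (u 0)) (fun i => u (i + 1)) j := by
  induction j with
  | zero => rfl
  | succ j ih =>
    show f (traj f x0 u (j + 1)) (u (j + 1)) = _
    rw [ih]; rfl

end STLMon
/-- Backward recursion for feasible sets (correctness of the offline computation,
equation (13)): for every `k ∈ [0, T]` and every reachable basic set `I ∈ 𝕀_k` with
`ι^root_I ≠ 1`, the `I`-determined feasible set satisfies
`X_k^I = ⋃_{I_s ∈ succ(I,k)} ( H_k(I, I_s) ∩ Υ(X_{k+1}^{I_s}) )`, where for `k = T` one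
sets `X_{T+1}^{I'} := 𝒳`. The horizon `T` exceeds the evaluation horizon of `Φ`. -/
theorem feasSet_backward_recursion {X U : Type} [Nonempty U]
    (Φ : Frag X) (f : X → U → X) (T : ℕ)
    (hT : ∀ p, IsHNode Φ p → endOf Φ p ≤ T)
    (k : ℕ) (hk : k ≤ T) (I : BasicSet Φ)
    (hmem : InFam Φ I k) (hroot0 : rootVal Φ I ≠ SatVal.zero)
    (hreach : ∃ xpre : ℕ → X, basicOf Φ xpre k = I)
    (hroot1 : rootVal Φ I ≠ SatVal.one) :
    feasSet Φ f k I =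
      ⋃ Is ∈ {J : BasicSet Φ | Succ Φ k I J},
        (consReg Φ Is k ∩
          oneStep f (if k = T then (Set.univ : Set X) else feasSet Φ f (k + 1) Is)) := by
  classical
  obtain ⟨xpre0, hI0⟩ := hreach
  have hfull : ∀ q u', Relevant Φ q u' → u' < T + 1 := by
    intro q u' h
    have h1 := hT q h.1
    have h2 := h.2.2
    omega
  apply Set.Subset.antisymm
  · -- ⊆ direction
    intro xk hxk
    obtain ⟨xpre, hIpre, u, hsat⟩ := hxk
    set y : ℕ → X := runFrom f k xpre xk u with hy
    have hagree : ∀ n, n < k → y n = xpre n := by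
      intro n hn; simp [hy, runFrom, hn]
    have hyk : y k = xk := by simp [hy, runFrom, traj]
    have hbk : basicOf Φ y k = I := by
      rw [basicOf_congr Φ y xpre k (fun t ht => hagree t ht), hIpre]
    have hrootIs : rootVal Φ (basicOf Φ y (k + 1)) ≠ SatVal.zero := by
      refine rootVal_persist Φ y k (k + 1) (by omega) hsat ?_
      rw [hbk]; exact hroot0
    have hSucc : Succ Φ k I (basicOf Φ y (k + 1)) := by
      refine ⟨hmem, hroot0, inFam_basicOf Φ y (k + 1), hrootIs, ?_⟩
      intro p t h ht
      rw [← hbk, basicOf_spec, basicOf_spec, if_pos (show t < k by omega),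
        if_pos (show t < k + 1 by omega)]
    simp only [Set.mem_iUnion]
    refine ⟨basicOf Φ y (k + 1), hSucc, ?_, ?_⟩
    · -- consistent region
      intro p h
      rw [basicOf_spec, if_pos (show k < k + 1 by omega), hyk]
      constructor
      · intro hz
        by_cases hx : xk ∈ regionAt Φ p
        · rw [if_pos hx] at hz; exact absurd hz (by decide)
        · exact hx
      · intro hz
        by_cases hx : xk ∈ regionAt Φ p
        · exact hx
        · rw [if_neg hx] at hz; exact absurd hz (by decide)
    · -- one-step feasibility
      by_cases hkT : k = T
      · rw [if_pos hkT]
        exact ⟨Classical.arbitrary U, Set.mem_univ _⟩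
      · rw [if_neg hkT]
        refine ⟨u 0, y, rfl, fun n => u (n + 1), ?_⟩
        have hsig : runFrom f (k + 1) y (f xk (u 0)) (fun n => u (n + 1)) = y := by
          funext n
          by_cases hn : n < k + 1
          · simp [runFrom, hn]
          · have hnk : ¬ n < k := by omega
            simp only [runFrom, if_neg hn, hy, if_neg hnk]
            rw [show n - k = (n - (k + 1)) + 1 by omega, traj_shift]
        rw [hsig]; exact hsat
  · -- ⊇ direction
    intro xk hxk
    simp only [Set.mem_iUnion] at hxk
    obtain ⟨Is, hS, hcons, hstep⟩ := hxk
    obtain ⟨-, -, hmemIs, hrootIs, hag⟩ := hS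
    obtain ⟨u0, hu0⟩ := hstep
    have hIsk : ∀ p (h : Relevant Φ p k),
        Is p k h = if xk ∈ regionAt Φ p then SatVal.one else SatVal.zero := by
      intro p h
      have hne : Is p k h ≠ SatVal.unk := by
        intro hu
        have := (hmemIs p k h).1 hu
        omega
      have hc := hcons p h
      cases hv : Is p k h with
      | zero => rw [if_neg (hc.1 hv)]
      | one => rw [if_pos (hc.2 hv)]
      | unk => exact absurd hv hne
    by_cases hkT : k = T
    · -- k = T : one-step set is the whole space
      subst hkT
      set u : ℕ → U := fun _ => Classical.arbitrary U with hu
      set y : ℕ → X := runFrom f k xpre0 xk u with hy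
      have hyk : y k = xk := by simp [hy, runFrom, traj]
      have hIs : Is = basicOf Φ y (k + 1) := by
        funext p t h
        have htT : t ≤ k := le_trans h.2.2 (hT p h.1)
        rcases lt_or_eq_of_le htT with hlt | heq
        · rw [← hag p t h hlt, ← hI0, basicOf_spec, basicOf_spec, if_pos hlt,
            if_pos (show t < k + 1 by omega),
            show y t = xpre0 t from by simp [hy, runFrom, hlt]]
        · subst heq
          rw [hIsk p h, basicOf_spec, if_pos (show t < t + 1 by omega), hyk]
      have hfs : fsat Φ y 0 := by
        have hr := rootVal_basicOf_full Φ y (k + 1) hfull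
        rw [← hIs] at hr
        by_contra hc
        rw [if_neg hc] at hr
        exact hrootIs hr
      exact ⟨xpre0, hI0, u, hfs⟩
    · -- k < T : recurse through the feasible set at k+1
      rw [if_neg hkT] at hu0
      obtain ⟨xpre', hIs', uz, hsatz⟩ := hu0
      set u' : ℕ → U := fun n => if n = 0 then u0 else uz (n - 1) with hu'
      set y : ℕ → X := runFrom f k xpre0 xk u' with hy
      set z : ℕ → X := runFrom f (k + 1) xpre' (f xk u0) uz with hz
      have hyk : y k = xk := by simp [hy, runFrom, traj]
      have hyz_hi : ∀ n, k < n → y n = z n := by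
        intro n hn
        have h1 : ¬ n < k := by omega
        have h2 : ¬ n < k + 1 := by omega
        simp only [hy, hz, runFrom, if_neg h1, if_neg h2]
        rw [show n - k = (n - (k + 1)) + 1 by omega, traj_shift]
        have e4 : (fun i => u' (i + 1)) = uz := by funext i; simp [hu']
        have e5 : u' 0 = u0 := by simp [hu']
        rw [e5, e4]
      have hbeq : basicOf Φ y (T + 1) = basicOf Φ z (T + 1) := by
        funext p t h
        rw [basicOf_spec, basicOf_spec]
        have htT : t < T + 1 := hfull p t h
        rw [if_pos htT, if_pos htT]
        rcases lt_trichotomy t k with hlt | heq | hgt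
        · have e1 : I p t h = Is p t h := hag p t h hlt
          rw [← hI0, ← hIs', basicOf_spec, basicOf_spec, if_pos hlt,
            if_pos (show t < k + 1 by omega)] at e1
          rw [show y t = xpre0 t from by simp [hy, runFrom, hlt],
            show z t = xpre' t from by simp [hz, runFrom, show t < k + 1 by omega]]
          exact e1
        · subst heq
          have e3 := hIsk p h
          rw [← hIs', basicOf_spec, if_pos (show t < t + 1 by omega)] at e3
          rw [hyk, show z t = xpre' t from by simp [hz, runFrom, show t < t + 1 by omega]]
          exact e3.symm
        · rw [hyz_hi t hgt]
      have hfsz : rootVal Φ (basicOf Φ z (T + 1)) = SatVal.one := by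
        rw [rootVal_basicOf_full Φ z (T + 1) hfull, if_pos hsatz]
      have hfsy : fsat Φ y 0 := by
        have hr := rootVal_basicOf_full Φ y (T + 1) hfull
        rw [hbeq, hfsz] at hr
        by_contra hc
        rw [if_neg hc] at hr
        exact absurd hr.symm (by decide)
      exact ⟨xpre0, hI0, u', hfsy⟩
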